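/- arXiv:1508.04397 — 3 statements merged into one kernel-verified Lean document; each statement's English description precedes it below -/
import Mathlib

section
/- Assume condition (*). For any μ ∈ ℝ with μ ∉ S(V), there exists an index I = I(μ) such that for all v ∈ V \ {0} and all j > i ≥ I: if f_{i+1}(v) ≥ f_i(v) + μ, then f_{j+1}(v) > f_j(v) + μ. -/
open Filter Topology NormedSpace
open scoped LinearAlgebra.Projectivization

set_option linter.unusedSectionVars false

noncomputable section

namespace CSW

variable {E : Type*} [NormedAddCommGroup E] [InnerProductSpace ℂ E] [FiniteDimensional ℂ E]
variable {V : Type*} [NormedAddCommGroup V] [InnerProductSpace ℂ V] [FiniteDimensional ℂ V]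

/-- The exponential `e^T` of a bounded operator, as a unit (invertible element) of the algebra
of continuous linear endomorphisms. -/
def expUnit (T : E →L[ℂ] E) : (E →L[ℂ] E)ˣ where
  val := exp T
  inv := exp (-T)
  val_inv := by
    rw [← exp_add_of_commute_of_mem_ball (𝕂 := ℂ) (Commute.refl T).neg_right
      ((expSeries_radius_eq_top ℂ (E →L[ℂ] E)).symm ▸ edist_lt_top _ _)
      ((expSeries_radius_eq_top ℂ (E →L[ℂ] E)).symm ▸ edist_lt_top _ _), add_neg_cancel, exp_zero]
  inv_val := by
    rw [← exp_add_of_commute_of_mem_ball (𝕂 := ℂ) (Commute.refl T).neg_left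
      ((expSeries_radius_eq_top ℂ (E →L[ℂ] E)).symm ▸ edist_lt_top _ _)
      ((expSeries_radius_eq_top ℂ (E →L[ℂ] E)).symm ▸ edist_lt_top _ _), neg_add_cancel, exp_zero]

/-- `Bseq A i` is `B_i = A_i A_{i-1}⁻¹` (with the junk value `B_0 = 1`). -/
def Bseq (A : ℕ → (E →L[ℂ] E)ˣ) (i : ℕ) : (E →L[ℂ] E)ˣ := A i * (A (i - 1))⁻¹

/-- Condition (*): for any subsequence, after passing to a further subsequence, `B_{α+1}` and
`B_{α+2}` both converge (in operator norm) to `g e^Λ g⁻¹` for some unitary `g`. -/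
def CondStar (A : ℕ → (E →L[ℂ] E)ˣ) (Λ : E →L[ℂ] E) : Prop :=
  ∀ φ : ℕ → ℕ, StrictMono φ → ∃ ψ : ℕ → ℕ, StrictMono ψ ∧ ∃ g : (E →L[ℂ] E)ˣ,
    (g : E →L[ℂ] E) ∈ unitary (E →L[ℂ] E) ∧
    Tendsto (fun j => (Bseq A (φ (ψ j) + 1) : E →L[ℂ] E)) atTop
      (𝓝 ((g * expUnit Λ * g⁻¹ : (E →L[ℂ] E)ˣ) : E →L[ℂ] E)) ∧
    Tendsto (fun j => (Bseq A (φ (ψ j) + 2) : E →L[ℂ] E)) atTop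
      (𝓝 ((g * expUnit Λ * g⁻¹ : (E →L[ℂ] E)ˣ) : E →L[ℂ] E))

/-- Condition (*)' for a given gauge sequence `g`: `g 0 = 1`, each `g i` is unitary,
`B_i g_i e^{-Λ} g_i⁻¹ → Id` and `g_{i-1}⁻¹ g_i → Id`. -/
def CondStar' (A : ℕ → (E →L[ℂ] E)ˣ) (Λ : E →L[ℂ] E) (g : ℕ → (E →L[ℂ] E)ˣ) : Prop :=
  g 0 = 1 ∧ (∀ i, (g i : E →L[ℂ] E) ∈ unitary (E →L[ℂ] E)) ∧
  Tendsto (fun i => ((Bseq A i * g i * expUnit (-Λ) * (g i)⁻¹ : (E →L[ℂ] E)ˣ) : E →L[ℂ] E))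
    atTop (𝓝 1) ∧
  Tendsto (fun i => (((g (i - 1))⁻¹ * g i : (E →L[ℂ] E)ˣ) : E →L[ℂ] E)) atTop (𝓝 1)

/-- Membership in `G_Λ = {g ∈ G : g Λ g⁻¹ = Λ}`. -/
def InGΛ (Λ : E →L[ℂ] E) (h : (E →L[ℂ] E)ˣ) : Prop :=
  (h : E →L[ℂ] E) * Λ = Λ * (h : E →L[ℂ] E)

/-- Membership in `K_Λ = {g ∈ K : g Λ g⁻¹ = Λ}`. -/
def InKΛ (Λ : E →L[ℂ] E) (h : (E →L[ℂ] E)ˣ) : Prop :=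
  (h : E →L[ℂ] E) ∈ unitary (E →L[ℂ] E) ∧ InGΛ Λ h

/-- A (continuous, finite-dimensional) complex representation `ρ` of `G = GL(E)` on a Hermitian
vector space `V`, mapping unitary elements to unitary elements, together with a self-adjoint
operator `Λ_V` on `V` compatible with `Λ` via `ρ(e^{tΛ}) = e^{tΛ_V}`. -/
structure Rep (Λ : E →L[ℂ] E) (V : Type*) [NormedAddCommGroup V] [InnerProductSpace ℂ V]
    [FiniteDimensional ℂ V] where
  ρ : (E →L[ℂ] E)ˣ →* (V →L[ℂ] V)ˣ
  continuous_ρ : Continuous fun u : (E →L[ℂ] E)ˣ => ((ρ u : (V →L[ℂ] V)ˣ) : V →L[ℂ] V)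
  unitary_ρ : ∀ u : (E →L[ℂ] E)ˣ, (u : E →L[ℂ] E) ∈ unitary (E →L[ℂ] E) →
    ((ρ u : (V →L[ℂ] V)ˣ) : V →L[ℂ] V) ∈ unitary (V →L[ℂ] V)
  ΛV : V →L[ℂ] V
  selfAdjoint_ΛV : IsSelfAdjoint ΛV
  exp_eq : ∀ t : ℝ, ((ρ (expUnit ((t : ℂ) • Λ)) : (V →L[ℂ] V)ˣ) : V →L[ℂ] V)
      = exp ((t : ℂ) • ΛV)

variable {Λ : E →L[ℂ] E}

theorem unit_apply_ne_zero (u : (V →L[ℂ] V)ˣ) {v : V} (hv : v ≠ 0) :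
    (u : V →L[ℂ] V) v ≠ 0 := by
  intro h
  apply hv
  have h2 : (((u⁻¹ : (V →L[ℂ] V)ˣ) : V →L[ℂ] V) * (u : V →L[ℂ] V)) v = 0 := by
    rw [ContinuousLinearMap.mul_apply, h, map_zero]
  rwa [Units.inv_mul, ContinuousLinearMap.one_apply] at h2

theorem unit_apply_injective (u : (V →L[ℂ] V)ˣ) :
    Function.Injective ((u : V →L[ℂ] V) : V → V) := by
  intro a b hab
  have h2 := congrArg (fun x => ((u⁻¹ : (V →L[ℂ] V)ˣ) : V →L[ℂ] V) x) hab
  simpa [← ContinuousLinearMap.mul_apply, Units.inv_mul] using h2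

/-- `f_i(v) = log ‖ρ(A_i) v‖`. -/
def fseq (R : Rep Λ V) (A : ℕ → (E →L[ℂ] E)ˣ) (v : V) (i : ℕ) : ℝ :=
  Real.log ‖(R.ρ (A i) : V →L[ℂ] V) v‖

/-- The quotient topology on the projectivization of a topological vector space. -/
instance : TopologicalSpace (ℙ ℂ V) := instTopologicalSpaceQuotient

/-- The natural action of `GL(E)` on `ℙ(V)` through the representation `R`. -/
def pact (R : Rep Λ V) (u : (E →L[ℂ] E)ˣ) : ℙ ℂ V → ℙ ℂ V :=
  Projectivization.map (((R.ρ u : (V →L[ℂ] V)ˣ) : V →L[ℂ] V) : V →ₗ[ℂ] V)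
    (unit_apply_injective _)

/-- The limit set `Lim(v) ⊆ ℙ(V)`: the union of the `ρ(K_Λ)`-orbits of all subsequential limits
of `[ρ(g_i⁻¹ A_i) v]`. -/
def LimSet (R : Rep Λ V) (A g : ℕ → (E →L[ℂ] E)ˣ) {v : V} (hv : v ≠ 0) :
    Set (ℙ ℂ V) :=
  {y | ∃ (w : V) (hw : w ≠ 0) (k : (E →L[ℂ] E)ˣ), InKΛ Λ k ∧
    y = Projectivization.mk ℂ ((R.ρ k : V →L[ℂ] V) w) (unit_apply_ne_zero _ hw) ∧
    ∃ φ : ℕ → ℕ, StrictMono φ ∧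
      Tendsto (fun j => Projectivization.mk ℂ
          ((R.ρ ((g (φ j))⁻¹ * A (φ j)) : V →L[ℂ] V) v) (unit_apply_ne_zero _ hv))
        atTop (𝓝 (Projectivization.mk ℂ w hw))}

/-- The eigenspace `U` of `Λ` with (real) eigenvalue `c`. -/
def eigU (Λ : E →L[ℂ] E) (c : ℝ) : Submodule ℂ E :=
  Module.End.eigenspace (Λ : E →ₗ[ℂ] E) (c : ℂ)

/-- The weight `d(v) = lim_i i⁻¹ log ‖A_i v‖` for the standard representation of `GL(E)` on `E`
(a junk value if the limit does not exist). -/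
def dstd (A : ℕ → (E →L[ℂ] E)ˣ) (v : E) : ℝ :=
  limUnder atTop fun i : ℕ => Real.log ‖(A i : E →L[ℂ] E) v‖ / i

/-- `p_s = Σ_{k ≤ s} n_k` where `n_k = dim U_k`. -/
def psum (Λ : E →L[ℂ] E) {r : ℕ} (lam : Fin r → ℝ) (s : Fin r) : ℕ :=
  ∑ k ∈ Finset.univ.filter (fun k => k ≤ s), Module.finrank ℂ (eigU Λ (lam k))

/-- `q_s = Σ_{k ≥ s} n_k` where `n_k = dim U_k`. -/
def qsum (Λ : E →L[ℂ] E) {r : ℕ} (lam : Fin r → ℝ) (s : Fin r) : ℕ :=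
  ∑ k ∈ Finset.univ.filter (fun k => s ≤ k), Module.finrank ℂ (eigU Λ (lam k))

/-- A model for the `p`-th exterior power of `E`, with its induced Hermitian metric
(determined by `⟨x₁∧⋯∧x_p, y₁∧⋯∧y_p⟩ = det(⟨x_i, y_j⟩)`), the induced representation of `GL(E)`,
and the induced self-adjoint operator (the derivation extension of `Λ`, pinned down by
`Rep.exp_eq` and equivariance of `wedge`). -/
structure ExtPower (Λ : E →L[ℂ] E) (p : ℕ) where
  P : Type
  [normed : NormedAddCommGroup P]
  [ips : InnerProductSpace ℂ P]
  [fd : FiniteDimensional ℂ P]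
  R : Rep Λ P
  wedge : E [⋀^Fin p]→ₗ[ℂ] P
  wedge_map : ∀ (u : (E →L[ℂ] E)ˣ) (x : Fin p → E),
    ((R.ρ u : (P →L[ℂ] P)ˣ) : P →L[ℂ] P) (wedge x) = wedge fun j => (u : E →L[ℂ] E) (x j)
  wedge_inner : ∀ x y : Fin p → E,
    (inner ℂ (wedge x) (wedge y) : ℂ) = (Matrix.of fun i j : Fin p => (inner ℂ (x i) (y j) : ℂ)).det
  wedge_span : Submodule.span ℂ (Set.range wedge) = ⊤

attribute [instance] ExtPower.normed ExtPower.ips ExtPower.fd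

/-- A bundle of the choices made in Section 2 of the paper: a gauge sequence `g` as in (*)',
the filtration `V_s` (with `V_{r+1} = 0`), complements `W_s` with `V_s = W_s ⊕ V_{s+1}` and
`Lim(W_s) = {[⋀^{n_s} U_s]}`, and identifications `C_i → Id` carrying `g_i⁻¹ A_i · W_s`
onto `U_s`. -/
structure Choices (A : ℕ → (E →L[ℂ] E)ˣ) (Λ : E →L[ℂ] E) (r : ℕ) (lam : Fin r → ℝ)
    (EP : ∀ p : ℕ, ExtPower Λ p) where
  g : ℕ → (E →L[ℂ] E)ˣ
  hg : CondStar' A Λ g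
  Vsub : Fin (r + 1) → Submodule ℂ E
  hVsub : ∀ s : Fin r, (Vsub s.castSucc : Set E) = {v : E | v = 0 ∨ dstd A v ≤ lam s}
  hVlast : Vsub (Fin.last r) = ⊥
  W : Fin r → Submodule ℂ E
  hW_sup : ∀ s : Fin r, W s ⊔ Vsub s.succ = Vsub s.castSucc
  hW_inf : ∀ s : Fin r, W s ⊓ Vsub s.succ = ⊥
  hW_lim : ∀ s : Fin r, ∀ b : Fin (Module.finrank ℂ (eigU Λ (lam s))) → E,
    LinearIndependent ℂ b → Submodule.span ℂ (Set.range b) = W s →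
    ∀ c : Fin (Module.finrank ℂ (eigU Λ (lam s))) → E,
    LinearIndependent ℂ c → Submodule.span ℂ (Set.range c) = eigU Λ (lam s) →
    ∃ (hb : (EP (Module.finrank ℂ (eigU Λ (lam s)))).wedge b ≠ 0)
      (hc : (EP (Module.finrank ℂ (eigU Λ (lam s)))).wedge c ≠ 0),
      LimSet (EP (Module.finrank ℂ (eigU Λ (lam s)))).R A g hb
        = {Projectivization.mk ℂ ((EP (Module.finrank ℂ (eigU Λ (lam s)))).wedge c) hc}
  C : ℕ → (E →L[ℂ] E)ˣ
  hC_lim : Tendsto (fun i => (C i : E →L[ℂ] E)) atTop (𝓝 1)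
  hC_map : ∀ (s : Fin r) (i : ℕ),
    Submodule.map ((((C i * (g i)⁻¹ * A i : (E →L[ℂ] E)ˣ) : E →L[ℂ] E) : E →ₗ[ℂ] E)) (W s)
      = eigU Λ (lam s)

/-- A model for the symmetric algebra `Sym(E*) = ⊕_k Sym^k(E*)` on the dual of `E`:
each graded piece is a Hermitian space carrying a compatible representation of `GL(E)`
(induced by the dual of the standard representation), `gen` identifies the degree-one piece
with `E*` equivariantly, and the product is bilinear, equivariant, has no zero divisors, and
together with the generators spans each graded piece. -/
structure SymModel (Λ : E →L[ℂ] E) where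
  P : ℕ → Type
  [normed : ∀ k, NormedAddCommGroup (P k)]
  [ips : ∀ k, InnerProductSpace ℂ (P k)]
  [fd : ∀ k, FiniteDimensional ℂ (P k)]
  R : ∀ k, Rep Λ (P k)
  mul : ∀ {k l : ℕ}, P k →ₗ[ℂ] P l →ₗ[ℂ] P (k + l)
  mul_equivariant : ∀ {k l : ℕ} (u : (E →L[ℂ] E)ˣ) (x : P k) (y : P l),
    (((R (k + l)).ρ u : (P (k + l) →L[ℂ] P (k + l))ˣ) : P (k + l) →L[ℂ] P (k + l)) (mul x y)
      = mul ((((R k).ρ u : (P k →L[ℂ] P k)ˣ) : P k →L[ℂ] P k) x)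
            ((((R l).ρ u : (P l →L[ℂ] P l)ˣ) : P l →L[ℂ] P l) y)
  mul_ne_zero : ∀ {k l : ℕ} {x : P k} {y : P l}, x ≠ 0 → y ≠ 0 → mul x y ≠ 0
  gen : (E →L[ℂ] ℂ) ≃ₗ[ℂ] P 1
  gen_equivariant : ∀ (u : (E →L[ℂ] E)ˣ) (l : E →L[ℂ] ℂ),
    (((R 1).ρ u : (P 1 →L[ℂ] P 1)ˣ) : P 1 →L[ℂ] P 1) (gen l)
      = gen (l.comp (((u⁻¹ : (E →L[ℂ] E)ˣ) : E →L[ℂ] E)))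
  span_gen_mul : ∀ k : ℕ, Submodule.span ℂ
      {z : P (k + 1) | ∃ (x : P k) (l : E →L[ℂ] ℂ), z = mul x (gen l)} = ⊤

attribute [instance] SymModel.normed SymModel.ips SymModel.fd


open scoped InnerProductSpace

theorem exp_apply_eigenvector {T : V →L[ℂ] V} {c : ℂ} {v : V} (h : T v = c • v) :
    exp T v = Complex.exp c • v := by
  have hpow : ∀ n : ℕ, (T ^ n) v = c ^ n • v := by
    intro n
    induction n with
    | zero => simp
    | succ n ih =>
      rw [pow_succ', ContinuousLinearMap.mul_apply, ih, map_smul, h, smul_smul, ← pow_succ]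
  have hsum := expSeries_summable' (𝕂 := ℂ) T
  have hc := expSeries_summable' (𝕂 := ℂ) c
  calc exp T v = (ContinuousLinearMap.apply ℂ V v) (exp T) := rfl
    _ = ∑' n : ℕ, (ContinuousLinearMap.apply ℂ V v) (((n.factorial : ℂ))⁻¹ • T ^ n) := by
        rw [exp_eq_tsum ℂ]; exact (ContinuousLinearMap.apply ℂ V v).map_tsum hsum
    _ = ∑' n : ℕ, (((n.factorial : ℂ))⁻¹ * c ^ n) • v := by
        simp only [ContinuousLinearMap.apply_apply, ContinuousLinearMap.smul_apply, hpow,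
          smul_smul]
    _ = (∑' n : ℕ, ((n.factorial : ℂ))⁻¹ * c ^ n) • v := by
        exact Summable.tsum_smul_const (by simpa [smul_eq_mul] using hc) v
    _ = Complex.exp c • v := by
        rw [Complex.exp_eq_exp_ℂ, exp_eq_tsum ℂ]; simp [smul_eq_mul]

theorem mem_spectrum_of_eigen {T : V →L[ℂ] V} {c : ℂ} {v : V} (hv : v ≠ 0) (h : T v = c • v) :
    c ∈ spectrum ℂ T := by
  rw [spectrum.mem_iff]
  intro hU
  have h0 : (algebraMap ℂ (V →L[ℂ] V) c - T) v = 0 := by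
    rw [ContinuousLinearMap.sub_apply, Algebra.algebraMap_eq_smul_one,
      ContinuousLinearMap.smul_apply, ContinuousLinearMap.one_apply, h, sub_self]
  apply hv
  calc v = ((↑hU.unit⁻¹ * ↑hU.unit : V →L[ℂ] V)) v := by
        rw [Units.inv_mul, ContinuousLinearMap.one_apply]
  _ = hU.unit⁻¹.val ((algebraMap ℂ (V →L[ℂ] V) c - T) v) := by
        rw [ContinuousLinearMap.mul_apply, IsUnit.unit_spec]
  _ = 0 := by rw [h0, map_zero]

theorem key_contra (ΛV : V →L[ℂ] V) (hΛV : IsSelfAdjoint ΛV) (μ : ℝ) {y : V} (hy : ‖y‖ = 1)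
    (h1 : Real.exp μ ≤ ‖exp ΛV y‖)
    (h2 : ‖exp ΛV (exp ΛV y)‖ ≤ Real.exp μ * ‖exp ΛV y‖) :
    (μ : ℂ) ∈ spectrum ℂ ΛV := by
  set M := exp ΛV with hMdef
  have hM : IsSelfAdjoint M := hMdef ▸ IsSelfAdjoint.exp hΛV
  have hsym : (↑M : V →ₗ[ℂ] V).IsSymmetric :=
    ContinuousLinearMap.isSelfAdjoint_iff_isSymmetric.mp hM
  have hkey : ∀ x z : V, ⟪M x, z⟫_ℂ = ⟪x, M z⟫_ℂ := fun x z => hsym x z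
  have hre : RCLike.re ⟪M (M y), y⟫_ℂ = ‖M y‖ ^ 2 := by
    rw [hkey (M y) y]
    exact inner_self_eq_norm_sq (M y)
  have hEpos : (0:ℝ) < Real.exp μ := Real.exp_pos μ
  have hMypos : (0:ℝ) < ‖M y‖ := lt_of_lt_of_le hEpos h1
  have hup : ‖M y‖ ^ 2 ≤ ‖M (M y)‖ := by
    calc ‖M y‖ ^ 2 = RCLike.re ⟪M (M y), y⟫_ℂ := hre.symm
      _ ≤ ‖⟪M (M y), y⟫_ℂ‖ := RCLike.re_le_norm _
      _ ≤ ‖M (M y)‖ * ‖y‖ := norm_inner_le_norm _ _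
      _ = ‖M (M y)‖ := by rw [hy, mul_one]
  have hMy : ‖M y‖ = Real.exp μ := by
    have : ‖M y‖ ^ 2 ≤ Real.exp μ * ‖M y‖ := le_trans hup h2
    nlinarith
  have hMMy : ‖M (M y)‖ = Real.exp μ * Real.exp μ := by
    rw [hMy] at hup h2
    nlinarith
  have hre2 : RCLike.re ⟪M (M y), y⟫_ℂ = Real.exp μ * Real.exp μ := by
    rw [hre, hMy]; ring
  have heig : M (M y) = ((Real.exp μ * Real.exp μ : ℝ) : ℂ) • y := by
    have hz : ‖M (M y) - ((Real.exp μ * Real.exp μ : ℝ) : ℂ) • y‖ ^ 2 = 0 := by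
      rw [@norm_sub_sq ℂ]
      have hir : RCLike.re ⟪M (M y), ((Real.exp μ * Real.exp μ : ℝ) : ℂ) • y⟫_ℂ
          = (Real.exp μ * Real.exp μ) * RCLike.re ⟪M (M y), y⟫_ℂ := by
        rw [inner_smul_right]
        exact RCLike.re_ofReal_mul _ _
      rw [hir, hre2, hMMy, norm_smul, hy]
      simp [Complex.norm_real, abs_of_pos (mul_pos hEpos hEpos)]
      ring
    have := pow_eq_zero_iff (n := 2) (by norm_num) |>.mp hz
    rw [norm_eq_zero, sub_eq_zero] at this
    exact this
  have hsymΛ : (↑ΛV : V →ₗ[ℂ] V).IsSymmetric :=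
    ContinuousLinearMap.isSelfAdjoint_iff_isSymmetric.mp hΛV
  let b := hsymΛ.eigenvectorBasis rfl
  have hy0 : y ≠ 0 := fun h => by simp [h] at hy
  obtain ⟨i, hi⟩ : ∃ i, b.repr y i ≠ 0 := by
    by_contra hc
    push_neg at hc
    apply hy0
    have : b.repr y = 0 := by ext i; exact hc i
    simpa using congrArg b.repr.symm this
  have hrepr : b.repr y i = ⟪b i, y⟫_ℂ := b.repr_apply_apply y i
  set lam := hsymΛ.eigenvalues rfl i with hlam
  have heigb : ΛV (b i) = ((lam : ℝ) : ℂ) • b i := hsymΛ.apply_eigenvectorBasis rfl i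
  have hMb : M (b i) = ((Real.exp lam : ℝ) : ℂ) • b i := by
    rw [hMdef, exp_apply_eigenvector heigb, Complex.ofReal_exp]
  have hcoord : ((Real.exp lam * Real.exp lam : ℝ) : ℂ) * ⟪b i, y⟫_ℂ
      = ((Real.exp μ * Real.exp μ : ℝ) : ℂ) * ⟪b i, y⟫_ℂ := by
    have lhs : ⟪b i, M (M y)⟫_ℂ = ((Real.exp lam * Real.exp lam : ℝ) : ℂ) * ⟪b i, y⟫_ℂ := by
      rw [← hkey (b i) (M y), ← hkey (M (b i)) y, hMb, map_smul, hMb, smul_smul,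
        inner_smul_left]
      rw [map_mul, Complex.conj_ofReal, Complex.ofReal_mul]
    have rhs : ⟪b i, M (M y)⟫_ℂ = ((Real.exp μ * Real.exp μ : ℝ) : ℂ) * ⟪b i, y⟫_ℂ := by
      rw [heig, inner_smul_right]
    rw [← lhs, rhs]
  have hinner_ne : ⟪b i, y⟫_ℂ ≠ 0 := by rwa [← hrepr]
  have hexp : Real.exp lam * Real.exp lam = Real.exp μ * Real.exp μ := by
    have := mul_right_cancel₀ hinner_ne hcoord
    exact_mod_cast this
  have hlamμ : lam = μ := by
    rw [← Real.exp_add, ← Real.exp_add] at hexp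
    have := Real.exp_injective hexp
    linarith
  rw [hlamμ] at heigb
  exact mem_spectrum_of_eigen (by
    intro h
    have := b.orthonormal.1 i
    rw [h] at this
    simp at this) heigb

theorem tendsto_units {f : ℕ → (E →L[ℂ] E)ˣ} {u : (E →L[ℂ] E)ˣ}
    (h : Tendsto (fun n => (f n : E →L[ℂ] E)) atTop (𝓝 (u : E →L[ℂ] E))) :
    Tendsto f atTop (𝓝 u) := by
  have hinv : Tendsto (fun n => (((f n)⁻¹ : (E →L[ℂ] E)ˣ) : E →L[ℂ] E)) atTop
      (𝓝 (((u⁻¹ : (E →L[ℂ] E)ˣ) : E →L[ℂ] E))) := by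
    have hc := NormedRing.inverse_continuousAt u
    have := hc.tendsto.comp h
    simpa [Function.comp_def, Ring.inverse_unit] using this
  rw [Units.isInducing_embedProduct.tendsto_nhds_iff]
  exact h.prodMk_nhds ((MulOpposite.continuous_op.tendsto _).comp hinv)

theorem coe_inv_unitary {W : Type*} [NormedAddCommGroup W] [InnerProductSpace ℂ W]
    [FiniteDimensional ℂ W] {g : (W →L[ℂ] W)ˣ}
    (hg : (g : W →L[ℂ] W) ∈ unitary (W →L[ℂ] W)) :
    ((g⁻¹ : (W →L[ℂ] W)ˣ) : W →L[ℂ] W) ∈ unitary (W →L[ℂ] W) := by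
  have heq : ((g⁻¹ : (W →L[ℂ] W)ˣ) : W →L[ℂ] W) = star (g : W →L[ℂ] W) := by
    calc ((g⁻¹ : (W →L[ℂ] W)ˣ) : W →L[ℂ] W)
        = (g⁻¹ : (W →L[ℂ] W)ˣ) * ((g : W →L[ℂ] W) * star (g : W →L[ℂ] W)) := by
          rw [Unitary.mul_star_self_of_mem hg, mul_one]
      _ = ((g⁻¹ : (W →L[ℂ] W)ˣ) * (g : W →L[ℂ] W)) * star (g : W →L[ℂ] W) := by
          rw [mul_assoc]
      _ = star (g : W →L[ℂ] W) := by rw [Units.inv_mul, one_mul]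
  rw [heq]
  exact Unitary.star_mem hg

/-- Lemma 2.1. Assume condition (*). For any `μ ∉ S(V)` there is `I = I(μ)`
such that for all `v ≠ 0` and `j > i ≥ I`: if `f_{i+1}(v) ≥ f_i(v) + μ` then
`f_{j+1}(v) > f_j(v) + μ`. -/
theorem mono_threshold (Λ : E →L[ℂ] E) (hΛ : IsSelfAdjoint Λ)
    (A : ℕ → (E →L[ℂ] E)ˣ) (hA0 : A 0 = 1) (hstar : CondStar A Λ)
    (R : Rep Λ V) (μ : ℝ) (hμ : (μ : ℂ) ∉ spectrum ℂ R.ΛV) :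
    ∃ I : ℕ, ∀ v : V, v ≠ 0 → ∀ i j : ℕ, I ≤ i → i < j →
      fseq R A v i + μ ≤ fseq R A v (i + 1) →
      fseq R A v j + μ < fseq R A v (j + 1) := by
  classical
  set T : ℕ → (V →L[ℂ] V) := fun i => ((R.ρ (Bseq A (i + 1)) : (V →L[ℂ] V)ˣ) : V →L[ℂ] V)
    with hTdef
  -- the key one-step statement
  have key : ∃ I : ℕ, ∀ i, I ≤ i → ∀ w : V, w ≠ 0 →
      Real.exp μ * ‖w‖ ≤ ‖T i w‖ → Real.exp μ * ‖T i w‖ < ‖T (i + 1) (T i w)‖ := by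
    by_contra hcon
    push_neg at hcon
    have hfreq : ∃ᶠ n in atTop, ∃ w : V, w ≠ 0 ∧ Real.exp μ * ‖w‖ ≤ ‖T n w‖ ∧
        ‖T (n + 1) (T n w)‖ ≤ Real.exp μ * ‖T n w‖ := by
      rw [Filter.frequently_atTop]
      intro I
      obtain ⟨i, hIi, w, hw0, hw1, hw2⟩ := hcon I
      exact ⟨i, hIi, w, hw0, hw1, hw2⟩
    obtain ⟨φ, hφmono, hφ⟩ := Filter.extraction_of_frequently_atTop hfreq
    obtain ⟨ψ, hψmono, g, hgu, h1, h2⟩ := hstar φ hφmono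
    set χ : ℕ → ℕ := fun j => φ (ψ j) with hχdef
    set L0 : (E →L[ℂ] E)ˣ := g * expUnit Λ * g⁻¹ with hL0def
    set L : V →L[ℂ] V := ((R.ρ L0 : (V →L[ℂ] V)ˣ) : V →L[ℂ] V) with hLdef
    have hT1 : Tendsto (fun j => T (χ j)) atTop (𝓝 L) := by
      have hu := tendsto_units h1
      exact ((R.continuous_ρ.tendsto L0).comp hu)
    have hT2 : Tendsto (fun j => T (χ j + 1)) atTop (𝓝 L) :=
      (R.continuous_ρ.tendsto L0).comp (tendsto_units h2)
    choose w hw0 hw1 hw2 using fun j => hφ (ψ j)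
    set u : ℕ → V := fun j => ((‖w j‖ : ℂ))⁻¹ • w j with hudef
    have hwpos : ∀ j, (0:ℝ) < ‖w j‖ := fun j => norm_pos_iff.mpr (hw0 j)
    have hu1 : ∀ j, ‖u j‖ = 1 := by
      intro j
      rw [hudef]
      simp only [norm_smul]
      rw [norm_inv, Complex.norm_real, Real.norm_eq_abs, abs_of_pos (hwpos j),
        inv_mul_cancel₀ (hwpos j).ne']
    have hTu : ∀ j i, T i (u j) = ((‖w j‖ : ℂ))⁻¹ • T i (w j) := by
      intro j i
      rw [hudef]
      simp [map_smul]
    have hscal : ∀ j (x : V), ‖((‖w j‖ : ℂ))⁻¹ • x‖ = (‖w j‖)⁻¹ * ‖x‖ := by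
      intro j x
      rw [norm_smul, norm_inv, Complex.norm_real, Real.norm_eq_abs, abs_of_pos (hwpos j)]
    have hu1' : ∀ j, Real.exp μ * ‖u j‖ ≤ ‖T (χ j) (u j)‖ := by
      intro j
      rw [hu1 j, mul_one, hTu, hscal]
      have := mul_le_mul_of_nonneg_left (hw1 j) (inv_nonneg.mpr (hwpos j).le)
      calc Real.exp μ = (‖w j‖)⁻¹ * (Real.exp μ * ‖w j‖) := by
            rw [mul_comm (Real.exp μ), ← mul_assoc, inv_mul_cancel₀ (hwpos j).ne', one_mul]
        _ ≤ (‖w j‖)⁻¹ * ‖T (χ j) (w j)‖ := this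
    have hu2' : ∀ j, ‖T (χ j + 1) (T (χ j) (u j))‖ ≤ Real.exp μ * ‖T (χ j) (u j)‖ := by
      intro j
      rw [hTu, map_smul, hscal, hscal]
      rw [mul_comm (Real.exp μ), mul_assoc, mul_comm _ (Real.exp μ)]
      exact mul_le_mul_of_nonneg_left (hw2 j) (inv_nonneg.mpr (hwpos j).le)
    have hmem : ∀ j, u j ∈ Metric.sphere (0 : V) 1 := by
      intro j; rw [mem_sphere_iff_norm, sub_zero]; exact hu1 j
    obtain ⟨y, hymem, θ, hθmono, hθt⟩ := (isCompact_sphere (0 : V) 1).tendsto_subseq hmem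
    have hy1 : ‖y‖ = 1 := by rwa [mem_sphere_iff_norm, sub_zero] at hymem
    have happly : Continuous fun p : (V →L[ℂ] V) × V => p.1 p.2 :=
      isBoundedBilinearMap_apply.continuous
    have happ1 : Tendsto (fun n => T (χ (θ n)) (u (θ n))) atTop (𝓝 (L y)) :=
      (happly.tendsto (L, y)).comp
        (((hT1.comp hθmono.tendsto_atTop)).prodMk_nhds hθt)
    have happ2 : Tendsto (fun n => T (χ (θ n) + 1) (T (χ (θ n)) (u (θ n)))) atTop
        (𝓝 (L (L y))) :=
      (happly.tendsto (L, L y)).comp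
        (((hT2.comp hθmono.tendsto_atTop)).prodMk_nhds happ1)
    have hA1 : Real.exp μ ≤ ‖L y‖ := by
      refine ge_of_tendsto' happ1.norm (fun n => ?_)
      have := hu1' (θ n)
      rwa [hu1 (θ n), mul_one] at this
    have hA2 : ‖L (L y)‖ ≤ Real.exp μ * ‖L y‖ :=
      le_of_tendsto_of_tendsto' happ2.norm (tendsto_const_nhds.mul happ1.norm)
        (fun n => hu2' (θ n))
    -- pass to the unitary conjugate
    have hexp1 : ((R.ρ (expUnit Λ) : (V →L[ℂ] V)ˣ) : V →L[ℂ] V) = exp R.ΛV := by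
      have h := R.exp_eq 1
      simpa [Complex.ofReal_one, one_smul] using h
    set P : (V →L[ℂ] V)ˣ := R.ρ g with hPdef
    have hPu : (↑P : V →L[ℂ] V) ∈ unitary (V →L[ℂ] V) := R.unitary_ρ g hgu
    have hPinvu : ((P⁻¹ : (V →L[ℂ] V)ˣ) : V →L[ℂ] V) ∈ unitary (V →L[ℂ] V) :=
      coe_inv_unitary hPu
    have hPinvP : ∀ x : V, ((P⁻¹ : (V →L[ℂ] V)ˣ) : V →L[ℂ] V) ((P : V →L[ℂ] V) x) = x := by
      intro x
      rw [← ContinuousLinearMap.mul_apply, ← Units.val_mul, inv_mul_cancel, Units.val_one,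
        ContinuousLinearMap.one_apply]
    have hLx : ∀ x : V, L x
        = (P : V →L[ℂ] V) (exp R.ΛV (((P⁻¹ : (V →L[ℂ] V)ˣ) : V →L[ℂ] V) x)) := by
      intro x
      rw [hLdef, hL0def, map_mul, map_mul, map_inv, ← hPdef, Units.val_mul, Units.val_mul,
        hexp1, ContinuousLinearMap.mul_apply, ContinuousLinearMap.mul_apply]
    have hnP : ∀ x : V, ‖(P : V →L[ℂ] V) x‖ = ‖x‖ :=
      ContinuousLinearMap.norm_map_of_mem_unitary hPu
    have hnPinv : ∀ x : V, ‖((P⁻¹ : (V →L[ℂ] V)ˣ) : V →L[ℂ] V) x‖ = ‖x‖ :=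
      ContinuousLinearMap.norm_map_of_mem_unitary hPinvu
    set y' : V := ((P⁻¹ : (V →L[ℂ] V)ˣ) : V →L[ℂ] V) y with hy'def
    have hy'1 : ‖y'‖ = 1 := by rw [hy'def, hnPinv, hy1]
    have hh1 : Real.exp μ ≤ ‖exp R.ΛV y'‖ := by
      have := hA1
      rwa [hLx y, hnP] at this
    have hh2 : ‖exp R.ΛV (exp R.ΛV y')‖ ≤ Real.exp μ * ‖exp R.ΛV y'‖ := by
      have := hA2
      rwa [hLx (L y), hLx y, hnP, hnP, hPinvP] at this
    exact hμ (key_contra R.ΛV R.selfAdjoint_ΛV μ hy'1 hh1 hh2)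
  -- deduce the statement from the one-step claim
  obtain ⟨I, hI⟩ := key
  refine ⟨I, ?_⟩
  intro v hv i j hIi hij hbase
  have hcomp : ∀ k : ℕ, ∀ x : V,
      ((R.ρ (A (k + 1)) : (V →L[ℂ] V)ˣ) : V →L[ℂ] V) x
        = T k (((R.ρ (A k) : (V →L[ℂ] V)ˣ) : V →L[ℂ] V) x) := by
    intro k x
    have hB : Bseq A (k + 1) * A k = A (k + 1) := by
      rw [Bseq]
      simp
    rw [hTdef, ← ContinuousLinearMap.mul_apply, ← Units.val_mul, ← map_mul, hB]
  have hAne : ∀ k : ℕ, ((R.ρ (A k) : (V →L[ℂ] V)ˣ) : V →L[ℂ] V) v ≠ 0 := fun k =>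
    unit_apply_ne_zero _ hv
  have hApos : ∀ k : ℕ, (0:ℝ) < ‖((R.ρ (A k) : (V →L[ℂ] V)ˣ) : V →L[ℂ] V) v‖ := fun k =>
    norm_pos_iff.mpr (hAne k)
  have hlog_le : ∀ a b : ℝ, 0 < a → 0 < b →
      (Real.log a + μ ≤ Real.log b ↔ Real.exp μ * a ≤ b) := by
    intro a b ha hb
    rw [Real.le_log_iff_exp_le hb, Real.exp_add, Real.exp_log ha, mul_comm]
  have hlog_lt : ∀ a b : ℝ, 0 < a → 0 < b →
      (Real.log a + μ < Real.log b ↔ Real.exp μ * a < b) := by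
    intro a b ha hb
    rw [Real.lt_log_iff_exp_lt hb, Real.exp_add, Real.exp_log ha, mul_comm]
  have step : ∀ k : ℕ, I ≤ k → fseq R A v k + μ ≤ fseq R A v (k + 1) →
      fseq R A v (k + 1) + μ < fseq R A v (k + 2) := by
    intro k hIk hle
    simp only [fseq] at hle ⊢
    rw [hcomp k v] at hle
    rw [hcomp k v, hcomp (k + 1) v, hcomp k v]
    set x := ((R.ρ (A k) : (V →L[ℂ] V)ˣ) : V →L[ℂ] V) v with hxdef
    have hxne : x ≠ 0 := hAne k
    have hxpos : (0:ℝ) < ‖x‖ := hApos k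
    have hTxne : T k x ≠ 0 := by
      rw [hTdef]
      exact unit_apply_ne_zero _ hxne
    have hTxpos : (0:ℝ) < ‖T k x‖ := norm_pos_iff.mpr hTxne
    have hTTxne : T (k + 1) (T k x) ≠ 0 := by
      rw [hTdef]
      exact unit_apply_ne_zero _ hTxne
    have hTTxpos : (0:ℝ) < ‖T (k + 1) (T k x)‖ := norm_pos_iff.mpr hTTxne
    rw [hlog_le _ _ hxpos hTxpos] at hle
    rw [hlog_lt _ _ hTxpos hTTxpos]
    exact hI k hIk x hxne hle
  have mono : ∀ m : ℕ, i + 1 ≤ m → fseq R A v m + μ < fseq R A v (m + 1) := by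
    intro m hm
    induction m, hm using Nat.le_induction with
    | base => exact step i hIi hbase
    | succ m hm ih =>
      exact step m (le_trans hIi (le_trans (Nat.le_succ i) hm)) ih.le
  exact mono j hij

end CSW
end
end

section
/- Assume condition (*). For v ∈ V \ {0}, the ρ(G_Λ)-orbit of the point [v̄] = lim_{t→∞} [ρ(C_0 λ(t)) v] is uniquely determined by the sequence (A_i) and the point [v]: it is independent of the choices of the gauge sequence (g_i), of the complementary subspaces W_s, and of the identifications C_i, C_0. -/
open Filter Topology NormedSpace
open scoped LinearAlgebra.Projectivization

set_option linter.unusedSectionVars false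

noncomputable section

namespace CSW

variable {E : Type*} [NormedAddCommGroup E] [InnerProductSpace ℂ E] [FiniteDimensional ℂ E]
variable {V : Type*} [NormedAddCommGroup V] [InnerProductSpace ℂ V] [FiniteDimensional ℂ V]

variable {Λ : E →L[ℂ] E}

/-! ### Auxiliary material for Statement 14 -/

set_option maxHeartbeats 1000000
set_option synthInstance.maxHeartbeats 1000000

theorem expCLM_apply_eigenvector {B : E →L[ℂ] E} {μ : ℂ} {x : E} (hx : B x = μ • x) :
    exp B x = Complex.exp μ • x := by
  have hpow : ∀ n : ℕ, (B ^ n) x = μ ^ n • x := by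
    intro n
    induction n with
    | zero => simp
    | succ n ih =>
      rw [pow_succ, ContinuousLinearMap.mul_apply, hx, map_smul, ih, smul_smul, ← pow_succ']
  have hs : Summable fun n : ℕ => ((Nat.factorial n : ℂ))⁻¹ • B ^ n := expSeries_summable' B
  have happ : exp B x = ∑' n : ℕ, (((Nat.factorial n : ℂ))⁻¹ * μ ^ n) • x := by
    rw [exp_eq_tsum ℂ]
    have h1 := (ContinuousLinearMap.apply ℂ E x).map_tsum hs
    simp only [ContinuousLinearMap.apply_apply] at h1
    rw [h1]
    congr 1
    funext n
    rw [ContinuousLinearMap.smul_apply, hpow, smul_smul]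
  have hs2 : Summable fun n : ℕ => ((Nat.factorial n : ℂ))⁻¹ * μ ^ n := by
    simpa [smul_eq_mul] using expSeries_summable' (𝕂 := ℂ) μ
  rw [happ, hs2.tsum_smul_const]
  congr 1
  rw [Complex.exp_eq_exp_ℂ, exp_eq_tsum ℂ]
  simp [smul_eq_mul]

theorem mem_eigU_iff {Λ : E →L[ℂ] E} {c : ℝ} {x : E} : x ∈ eigU Λ c ↔ Λ x = (c : ℂ) • x := by
  rw [eigU, Module.End.mem_eigenspace_iff]
  rfl

/-- The orthogonal projection onto the eigenspace `U_c` of `Λ`, as an endomorphism of `E`. -/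
def projE (Λ : E →L[ℂ] E) (c : ℝ) : E →L[ℂ] E :=
  (eigU Λ c).subtypeL.comp (Submodule.orthogonalProjectionOnto (eigU Λ c))

theorem projE_apply_mem {Λ : E →L[ℂ] E} {c : ℝ} {x : E} (hx : x ∈ eigU Λ c) :
    projE Λ c x = x := by
  simp [projE, Submodule.starProjection_eq_self_iff.mpr hx]

theorem projE_apply_orthogonal {Λ : E →L[ℂ] E} {c : ℝ} {x : E} (hx : x ∈ (eigU Λ c)ᗮ) :
    projE Λ c x = 0 := by
  simp [projE, Submodule.orthogonalProjectionOnto_apply_of_mem_orthogonal hx]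

theorem projE_mem (Λ : E →L[ℂ] E) (c : ℝ) (x : E) : projE Λ c x ∈ eigU Λ c :=
  (Submodule.orthogonalProjectionOnto (eigU Λ c) x).2

theorem eigU_le_orthogonal {Λ : E →L[ℂ] E} (hΛ : IsSelfAdjoint Λ) {c d : ℝ} (hcd : c ≠ d) :
    eigU Λ d ≤ (eigU Λ c)ᗮ := by
  intro x hx
  rw [Submodule.mem_orthogonal]
  intro u hu
  have hne : (c : ℂ) ≠ (d : ℂ) := by exact_mod_cast hcd
  have := hΛ.isSymmetric.orthogonalFamily_eigenspaces hne ⟨u, hu⟩ ⟨x, hx⟩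
  simpa using this

theorem clm_ext_of_eigU {Λ : E →L[ℂ] E} {r : ℕ} {lam : Fin r → ℝ}
    (hUtop : (⨆ s, eigU Λ (lam s)) = ⊤) {S T : E →L[ℂ] E}
    (h : ∀ a : Fin r, ∀ x ∈ eigU Λ (lam a), S x = T x) : S = T := by
  ext x
  have hx : x ∈ (⨆ s, eigU Λ (lam s)) := by rw [hUtop]; exact Submodule.mem_top
  have hker : (⨆ s, eigU Λ (lam s)) ≤ LinearMap.ker ((S : E →ₗ[ℂ] E) - (T : E →ₗ[ℂ] E)) := by
    refine iSup_le fun a y hy => ?_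
    rw [LinearMap.mem_ker, LinearMap.sub_apply]
    have := h a y hy
    simpa [sub_eq_zero] using this
  have := hker hx
  rw [LinearMap.mem_ker, LinearMap.sub_apply] at this
  have : S x = T x := by simpa [sub_eq_zero] using this
  exact this

theorem sum_projE {Λ : E →L[ℂ] E} (hΛ : IsSelfAdjoint Λ) {r : ℕ} {lam : Fin r → ℝ}
    (hinj : Function.Injective lam) (hUtop : (⨆ s, eigU Λ (lam s)) = ⊤) :
    (∑ a : Fin r, projE Λ (lam a)) = 1 := by
  refine clm_ext_of_eigU hUtop fun a x hx => ?_
  rw [ContinuousLinearMap.sum_apply, ContinuousLinearMap.one_apply, Finset.sum_eq_single a]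
  · exact projE_apply_mem hx
  · exact fun b _ hb => projE_apply_orthogonal
      (eigU_le_orthogonal hΛ (fun hc => hb (hinj hc)) hx)
  · exact fun ha => absurd (Finset.mem_univ a) ha

theorem exp_smul_eigU {Λ : E →L[ℂ] E} (t : ℝ) {c : ℝ} {x : E} (hx : x ∈ eigU Λ c) :
    exp ((t : ℂ) • Λ) x = Complex.exp ((t : ℂ) * c) • x := by
  refine expCLM_apply_eigenvector ?_
  rw [ContinuousLinearMap.smul_apply, mem_eigU_iff.mp hx, smul_smul]

theorem exp_smul_eq_sum {Λ : E →L[ℂ] E} (hΛ : IsSelfAdjoint Λ) {r : ℕ} {lam : Fin r → ℝ}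
    (hinj : Function.Injective lam) (hUtop : (⨆ s, eigU Λ (lam s)) = ⊤) (t : ℝ) :
    exp ((t : ℂ) • Λ) = ∑ a : Fin r, Complex.exp ((t : ℂ) * lam a) • projE Λ (lam a) := by
  refine clm_ext_of_eigU hUtop fun a x hx => ?_
  rw [exp_smul_eigU t hx, ContinuousLinearMap.sum_apply, Finset.sum_eq_single a]
  · rw [ContinuousLinearMap.smul_apply, projE_apply_mem hx]
  · intro b _ hb
    rw [ContinuousLinearMap.smul_apply,
      projE_apply_orthogonal (eigU_le_orthogonal hΛ (fun hc => hb (hinj hc)) hx), smul_zero]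
  · exact fun ha => absurd (Finset.mem_univ a) ha

theorem comp_projE {Λ : E →L[ℂ] E} (c : ℝ) : Λ * projE Λ c = (c : ℂ) • projE Λ c := by
  ext x
  rw [ContinuousLinearMap.mul_apply, mem_eigU_iff.mp (projE_mem Λ c x),
    ContinuousLinearMap.smul_apply]

theorem projE_comp {Λ : E →L[ℂ] E} (hΛ : IsSelfAdjoint Λ) (c : ℝ) :
    projE Λ c * Λ = (c : ℂ) • projE Λ c := by
  ext x
  have hsub : x - projE Λ c x ∈ (eigU Λ c)ᗮ := by
    simpa [projE] using Submodule.sub_starProjection_mem_orthogonal (K := eigU Λ c) x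
  have horth : Λ (x - projE Λ c x) ∈ (eigU Λ c)ᗮ := by
    rw [Submodule.mem_orthogonal] at hsub ⊢
    intro u hu
    have h1 : (inner ℂ u (Λ (x - projE Λ c x)) : ℂ) = inner ℂ (Λ u) (x - projE Λ c x) :=
      (hΛ.isSymmetric u _).symm
    rw [h1, mem_eigU_iff.mp hu, inner_smul_left, hsub u hu, mul_zero]
  have hdecomp : Λ x = Λ (projE Λ c x) + Λ (x - projE Λ c x) := by
    rw [← map_add, add_sub_cancel]
  rw [ContinuousLinearMap.mul_apply, hdecomp, map_add, mem_eigU_iff.mp (projE_mem Λ c x),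
    map_smul, projE_apply_mem (projE_mem Λ c x), projE_apply_orthogonal horth, add_zero,
    ContinuousLinearMap.smul_apply]

theorem tendsto_conj_exp {Λ : E →L[ℂ] E} (hΛ : IsSelfAdjoint Λ) {r : ℕ} {lam : Fin r → ℝ}
    (hanti : StrictAnti lam) (hUtop : (⨆ s, eigU Λ (lam s)) = ⊤) (T : E →L[ℂ] E)
    (hvan : ∀ a b : Fin r, a < b → projE Λ (lam a) * T * projE Λ (lam b) = 0) :
    Tendsto (fun t : ℝ => exp ((t : ℂ) • Λ) * T * exp (-((t : ℂ) • Λ))) atTop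
      (𝓝 (∑ a : Fin r, projE Λ (lam a) * T * projE Λ (lam a))) := by
  have hinj := hanti.injective
  have hneg : ∀ t : ℝ, -((t : ℂ) • Λ) = ((-t : ℝ) : ℂ) • Λ := by
    intro t; push_cast; rw [neg_smul]
  have hrw : ∀ t : ℝ, exp ((t : ℂ) • Λ) * T * exp (-((t : ℂ) • Λ))
      = ∑ a : Fin r, ∑ b : Fin r,
          (Complex.exp ((t : ℂ) * lam a) * Complex.exp (((-t : ℝ) : ℂ) * lam b)) •
            (projE Λ (lam a) * T * projE Λ (lam b)) := by
    intro t
    rw [hneg t, exp_smul_eq_sum hΛ hinj hUtop t, exp_smul_eq_sum hΛ hinj hUtop (-t)]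
    rw [Finset.sum_mul, Finset.sum_mul]
    refine Finset.sum_congr rfl fun a _ => ?_
    rw [Finset.mul_sum]
    refine Finset.sum_congr rfl fun b _ => ?_
    rw [smul_mul_assoc, smul_mul_assoc, mul_smul_comm, smul_smul]
  have hsum_eq : (∑ a : Fin r, projE Λ (lam a) * T * projE Λ (lam a))
      = ∑ a : Fin r, ∑ b : Fin r,
          (if b = a then projE Λ (lam a) * T * projE Λ (lam a) else 0) := by
    refine Finset.sum_congr rfl fun a _ => ?_
    rw [Finset.sum_ite_eq' Finset.univ a fun _ => projE Λ (lam a) * T * projE Λ (lam a)]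
    simp
  refine Tendsto.congr (fun t => (hrw t).symm) ?_
  rw [hsum_eq]
  refine tendsto_finset_sum _ fun a _ => tendsto_finset_sum _ fun b _ => ?_
  rcases lt_trichotomy a b with hab | rfl | hba
  · rw [if_neg hab.ne', hvan a b hab]
    simpa using (tendsto_const_nhds : Tendsto (fun _ : ℝ => (0 : E →L[ℂ] E)) atTop _)
  · rw [if_pos rfl]
    have hconst : ∀ t : ℝ,
        (Complex.exp ((t : ℂ) * lam a) * Complex.exp (((-t : ℝ) : ℂ) * lam a)) = 1 := by
      intro t
      rw [← Complex.exp_add]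
      have : (t : ℂ) * lam a + ((-t : ℝ) : ℂ) * lam a = 0 := by push_cast; ring
      rw [this, Complex.exp_zero]
    simp only [hconst, one_smul]
    exact tendsto_const_nhds
  · rw [if_neg hba.ne]
    have hlt : lam a - lam b < 0 := sub_neg.mpr (hanti hba)
    have hs : ∀ t : ℝ, Complex.exp ((t : ℂ) * lam a) * Complex.exp (((-t : ℝ) : ℂ) * lam b)
        = Complex.exp (((t * (lam a - lam b) : ℝ) : ℂ)) := by
      intro t
      rw [← Complex.exp_add]
      congr 1
      push_cast
      ring
    rw [tendsto_zero_iff_norm_tendsto_zero]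
    have hnorm : ∀ t : ℝ,
        ‖(Complex.exp ((t : ℂ) * lam a) * Complex.exp (((-t : ℝ) : ℂ) * lam b)) •
          (projE Λ (lam a) * T * projE Λ (lam b))‖
        = Real.exp (t * (lam a - lam b)) * ‖projE Λ (lam a) * T * projE Λ (lam b)‖ := by
      intro t
      rw [hs t]
      refine (norm_smul (Complex.exp (((t * (lam a - lam b) : ℝ)) : ℂ))
        (projE Λ (lam a) * T * projE Λ (lam b))).trans ?_
      congr 1
      rw [Complex.norm_exp, Complex.ofReal_re]
    refine Tendsto.congr (fun t => (hnorm t).symm) ?_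
    have h1 : Tendsto (fun t : ℝ => t * (lam a - lam b)) atTop atBot :=
      Tendsto.atTop_mul_const_of_neg hlt tendsto_id
    have h2 := Real.tendsto_exp_atBot.comp h1
    simpa using h2.mul_const ‖projE Λ (lam a) * T * projE Λ (lam b)‖

/-- The "flag" `F_j = ⊕_{k ≥ j} U_k` determined by the eigenspaces of `Λ`. -/
def flagSup (Λ : E →L[ℂ] E) {r : ℕ} (lam : Fin r → ℝ) (j : Fin (r + 1)) : Submodule ℂ E :=
  ⨆ k : Fin r, ⨆ (_ : j ≤ k.castSucc), eigU Λ (lam k)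

theorem flagSup_last (Λ : E →L[ℂ] E) {r : ℕ} (lam : Fin r → ℝ) :
    flagSup Λ lam (Fin.last r) = ⊥ := by
  rw [eq_bot_iff]
  refine iSup_le fun k => iSup_le fun hk => absurd hk ?_
  exact (Fin.castSucc_lt_last k).not_ge

theorem flagSup_castSucc (Λ : E →L[ℂ] E) {r : ℕ} (lam : Fin r → ℝ) (s : Fin r) :
    flagSup Λ lam s.castSucc = eigU Λ (lam s) ⊔ flagSup Λ lam s.succ := by
  apply le_antisymm
  · refine iSup_le fun k => iSup_le fun hk => ?_
    rcases eq_or_lt_of_le (Fin.castSucc_le_castSucc_iff.mp hk) with h | h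
    · rw [← h]; exact le_sup_left
    · refine le_sup_of_le_right ?_
      exact le_iSup_of_le k (le_iSup_of_le (Fin.succ_le_castSucc_iff.mpr h) le_rfl)
  · refine sup_le ?_ ?_
    · exact le_iSup_of_le s (le_iSup_of_le le_rfl le_rfl)
    · refine iSup_le fun k => iSup_le fun hk => ?_
      exact le_iSup_of_le k (le_iSup_of_le (le_trans (Fin.castSucc_le_succ s) hk) le_rfl)

theorem eigU_le_flagSup (Λ : E →L[ℂ] E) {r : ℕ} (lam : Fin r → ℝ) (b : Fin r) :
    eigU Λ (lam b) ≤ flagSup Λ lam b.castSucc :=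
  le_iSup_of_le b (le_iSup_of_le le_rfl le_rfl)

theorem map_unit_mul (u w : (E →L[ℂ] E)ˣ) (p : Submodule ℂ E) :
    Submodule.map (((u * w : (E →L[ℂ] E)ˣ) : E →L[ℂ] E) : E →ₗ[ℂ] E) p
      = Submodule.map ((u : E →L[ℂ] E) : E →ₗ[ℂ] E) (Submodule.map ((w : E →L[ℂ] E) : E →ₗ[ℂ] E) p) := by
  ext x
  simp only [Submodule.mem_map, Units.val_mul, ContinuousLinearMap.mul_apply]
  constructor
  · rintro ⟨y, hy, rfl⟩
    exact ⟨(w : E →L[ℂ] E) y, ⟨y, hy, rfl⟩, rfl⟩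
  · rintro ⟨z, ⟨y, hy, rfl⟩, rfl⟩
    exact ⟨y, hy, rfl⟩

theorem map_unit_one (p : Submodule ℂ E) :
    Submodule.map ((((1 : (E →L[ℂ] E)ˣ)) : E →L[ℂ] E) : E →ₗ[ℂ] E) p = p := by
  ext x
  simp [Submodule.mem_map]

theorem choices_map_flag {A : ℕ → (E →L[ℂ] E)ˣ} {Λ : E →L[ℂ] E} {r : ℕ} {lam : Fin r → ℝ}
    {EP : ∀ p : ℕ, ExtPower Λ p} (hA0 : A 0 = 1) (ch : Choices A Λ r lam EP) :
    ∀ j : Fin (r + 1),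
      Submodule.map (((ch.C 0 : (E →L[ℂ] E)ˣ) : E →L[ℂ] E) : E →ₗ[ℂ] E) (ch.Vsub j) = flagSup Λ lam j := by
  have hC0W : ∀ s : Fin r,
      Submodule.map (((ch.C 0 : (E →L[ℂ] E)ˣ) : E →L[ℂ] E) : E →ₗ[ℂ] E) (ch.W s) = eigU Λ (lam s) := by
    intro s
    have := ch.hC_map s 0
    rw [ch.hg.1, hA0] at this
    simpa using this
  intro j
  induction j using Fin.reverseInduction with
  | last =>
    rw [ch.hVlast, flagSup_last]
    exact Submodule.map_bot _
  | cast s ih =>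
    rw [← ch.hW_sup s, Submodule.map_sup, ih, flagSup_castSucc, hC0W s]

/-- The rank-one "projection onto the line spanned by `w`" (junk value `0` for `w = 0`). -/
def projL (w : V) : V →L[ℂ] V := ((inner ℂ w w : ℂ))⁻¹ • (innerSL ℂ w).smulRight w

theorem projL_apply (w u : V) :
    projL w u = (((inner ℂ w w : ℂ))⁻¹ * (inner ℂ w u : ℂ)) • w := by
  simp [projL, ContinuousLinearMap.smul_apply, ContinuousLinearMap.smulRight_apply,
    innerSL_apply_apply, smul_smul]

theorem projL_self {w : V} (hw : w ≠ 0) : projL w w = w := by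
  rw [projL_apply, inv_mul_cancel₀ (inner_self_ne_zero.mpr hw), one_smul]

theorem projL_smul {c : ℂ} (hc : c ≠ 0) (w : V) : projL (c • w) = projL w := by
  by_cases hw : w = 0
  · simp [hw]
  · ext u
    rw [projL_apply, projL_apply, inner_smul_left, inner_smul_left, inner_smul_right,
      smul_smul]
    congr 1
    have hcc : (starRingEnd ℂ) c ≠ 0 := by simpa using hc
    have hww : (inner ℂ w w : ℂ) ≠ 0 := inner_self_ne_zero.mpr hw
    field_simp

theorem projL_continuousOn : ContinuousOn (projL (V := V)) {x : V | x ≠ 0} := by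
  have hbil : Continuous fun w : V => (innerSL ℂ w).smulRight w := by
    have h1 : Continuous fun w : V =>
        ((ContinuousLinearMap.smulRightL ℂ V V) (innerSL ℂ w), w) :=
      (((ContinuousLinearMap.smulRightL ℂ V V).continuous.comp
        (innerSL ℂ).continuous)).prodMk continuous_id
    exact isBoundedBilinearMap_apply.continuous.comp h1
  have hinner : Continuous fun w : V => (inner ℂ w w : ℂ) :=
    Continuous.inner continuous_id continuous_id
  refine (?_ : ContinuousOn (fun w : V => ((inner ℂ w w : ℂ))⁻¹) _).smul hbil.continuousOn
  exact ContinuousOn.inv₀ hinner.continuousOn fun x hx => inner_self_ne_zero.mpr hx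

theorem projL_continuousAt {z : V} (hz : z ≠ 0) : ContinuousAt (projL (V := V)) z :=
  projL_continuousOn.continuousAt (IsOpen.mem_nhds isOpen_compl_singleton hz)

/-- The continuous injection `ℙ(V) → End(V)` sending a line to the orthogonal projection
onto it. -/
def PhiMap : ℙ ℂ V → (V →L[ℂ] V) :=
  Projectivization.lift (fun w : {v : V // v ≠ 0} => projL (w : V))
    (by
      rintro ⟨a, ha⟩ ⟨b, hb⟩ t h
      simp only at h
      subst h
      have ht : t ≠ 0 := by
        rintro rfl
        simp at ha
      exact projL_smul ht b)

theorem PhiMap_mk {w : V} (hw : w ≠ 0) : PhiMap (Projectivization.mk ℂ w hw) = projL w := rfl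

theorem PhiMap_continuous : Continuous (PhiMap (V := V)) := by
  refine Continuous.quotient_lift ?_ _
  exact projL_continuousOn.comp_continuous continuous_subtype_val fun w => w.2


/-- Proposition 2.9. Assume condition (*). The `ρ(G_Λ)`-orbit of
`[v̄] = lim_{t→∞} [ρ(C_0 λ(t)) v]` is uniquely determined by the sequence `(A_i)` and `[v]`:
it is independent of the choices of the gauge sequence `(g_i)`, the complements `W_s` and the
identifications `C_i` (two such tuples are bundled in `ch` and `ch'`). -/
theorem vbar_orbit_unique (Λ : E →L[ℂ] E) (hΛ : IsSelfAdjoint Λ)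
    (A : ℕ → (E →L[ℂ] E)ˣ) (hA0 : A 0 = 1) (hstar : CondStar A Λ)
    (r : ℕ) (lam : Fin r → ℝ) (hlam : StrictAnti lam)
    (hUne : ∀ s, eigU Λ (lam s) ≠ ⊥) (hUtop : (⨆ s, eigU Λ (lam s)) = ⊤)
    (EP : ∀ p : ℕ, ExtPower Λ p) (ch ch' : Choices A Λ r lam EP)
    (R : Rep Λ V) (v : V) (hv : v ≠ 0)
    (vbar vbar' : V) (hvbar : vbar ≠ 0) (hvbar' : vbar' ≠ 0)
    (hlim : Tendsto (fun t : ℝ => Projectivization.mk ℂ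
        ((R.ρ (expUnit ((t : ℂ) • Λ) * ch.C 0) : V →L[ℂ] V) v) (unit_apply_ne_zero _ hv))
      atTop (𝓝 (Projectivization.mk ℂ vbar hvbar)))
    (hlim' : Tendsto (fun t : ℝ => Projectivization.mk ℂ
        ((R.ρ (expUnit ((t : ℂ) • Λ) * ch'.C 0) : V →L[ℂ] V) v) (unit_apply_ne_zero _ hv))
      atTop (𝓝 (Projectivization.mk ℂ vbar' hvbar'))) :
    ∃ h : (E →L[ℂ] E)ˣ, InGΛ Λ h ∧
      Projectivization.mk ℂ vbar' hvbar' =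
        Projectivization.mk ℂ ((R.ρ h : V →L[ℂ] V) vbar) (unit_apply_ne_zero _ hvbar) := by
  classical
  have hinj := hlam.injective
  have key := choices_map_flag hA0 ch
  have key' := choices_map_flag hA0 ch'
  have hVeq : ∀ j, ch.Vsub j = ch'.Vsub j := by
    intro j
    induction j using Fin.lastCases with
    | last => rw [ch.hVlast, ch'.hVlast]
    | cast s => exact SetLike.coe_injective ((ch.hVsub s).trans (ch'.hVsub s).symm)
  set hU : (E →L[ℂ] E)ˣ := ch'.C 0 * (ch.C 0)⁻¹ with hUdef
  have hmul1 : hU * ch.C 0 = ch'.C 0 := by rw [hUdef]; group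
  have hmul2 : hU⁻¹ * ch'.C 0 = ch.C 0 := by rw [hUdef]; group
  have hflag : ∀ j, Submodule.map (((hU : (E →L[ℂ] E)ˣ) : E →L[ℂ] E) : E →ₗ[ℂ] E) (flagSup Λ lam j)
      = flagSup Λ lam j := by
    intro j
    calc Submodule.map (((hU : (E →L[ℂ] E)ˣ) : E →L[ℂ] E) : E →ₗ[ℂ] E) (flagSup Λ lam j)
        = Submodule.map (((hU : (E →L[ℂ] E)ˣ) : E →L[ℂ] E) : E →ₗ[ℂ] E)
            (Submodule.map (((ch.C 0 : (E →L[ℂ] E)ˣ) : E →L[ℂ] E) : E →ₗ[ℂ] E) (ch.Vsub j)) := by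
          rw [key j]
      _ = Submodule.map (((hU * ch.C 0 : (E →L[ℂ] E)ˣ) : E →L[ℂ] E) : E →ₗ[ℂ] E) (ch.Vsub j) :=
          (map_unit_mul _ _ _).symm
      _ = Submodule.map (((ch'.C 0 : (E →L[ℂ] E)ˣ) : E →L[ℂ] E) : E →ₗ[ℂ] E) (ch'.Vsub j) := by
          rw [hmul1, hVeq j]
      _ = flagSup Λ lam j := key' j
  have hflaginv : ∀ j, Submodule.map (((hU⁻¹ : (E →L[ℂ] E)ˣ) : E →L[ℂ] E) : E →ₗ[ℂ] E) (flagSup Λ lam j)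
      = flagSup Λ lam j := by
    intro j
    calc Submodule.map (((hU⁻¹ : (E →L[ℂ] E)ˣ) : E →L[ℂ] E) : E →ₗ[ℂ] E) (flagSup Λ lam j)
        = Submodule.map (((hU⁻¹ : (E →L[ℂ] E)ˣ) : E →L[ℂ] E) : E →ₗ[ℂ] E)
            (Submodule.map (((ch'.C 0 : (E →L[ℂ] E)ˣ) : E →L[ℂ] E) : E →ₗ[ℂ] E) (ch'.Vsub j)) := by
          rw [key' j]
      _ = Submodule.map (((hU⁻¹ * ch'.C 0 : (E →L[ℂ] E)ˣ) : E →L[ℂ] E) : E →ₗ[ℂ] E) (ch'.Vsub j) :=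
          (map_unit_mul _ _ _).symm
      _ = Submodule.map (((ch.C 0 : (E →L[ℂ] E)ˣ) : E →L[ℂ] E) : E →ₗ[ℂ] E) (ch.Vsub j) := by
          rw [hmul2, hVeq j]
      _ = flagSup Λ lam j := key j
  have hvanGen : ∀ (u : (E →L[ℂ] E)ˣ),
      (∀ j, Submodule.map (((u : (E →L[ℂ] E)ˣ) : E →L[ℂ] E) : E →ₗ[ℂ] E) (flagSup Λ lam j)
        = flagSup Λ lam j) →
      ∀ a b : Fin r, a < b →
        projE Λ (lam a) * ((u : (E →L[ℂ] E)ˣ) : E →L[ℂ] E) * projE Λ (lam b) = 0 := by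
    intro u hu a b hab
    ext x
    simp only [ContinuousLinearMap.mul_apply, ContinuousLinearMap.zero_apply]
    have h1 : projE Λ (lam b) x ∈ flagSup Λ lam b.castSucc :=
      eigU_le_flagSup Λ lam b (projE_mem Λ (lam b) x)
    have h2 : ((u : (E →L[ℂ] E)ˣ) : E →L[ℂ] E) (projE Λ (lam b) x)
        ∈ flagSup Λ lam b.castSucc := by
      rw [← hu b.castSucc]
      exact Submodule.mem_map_of_mem h1
    have h3 : flagSup Λ lam b.castSucc ≤ (eigU Λ (lam a))ᗮ := by
      refine iSup_le fun kk => iSup_le fun hk => eigU_le_orthogonal hΛ ?_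
      have hbk : b ≤ kk := Fin.castSucc_le_castSucc_iff.mp hk
      exact fun hc => absurd (hinj hc) (lt_of_lt_of_le hab hbk).ne
    exact projE_apply_orthogonal (h3 h2)
  have hvan := hvanGen hU hflag
  have hvan' := hvanGen hU⁻¹ hflaginv
  set Dinf : E →L[ℂ] E :=
    ∑ a : Fin r, projE Λ (lam a) * ((hU : (E →L[ℂ] E)ˣ) : E →L[ℂ] E) * projE Λ (lam a)
    with hDinf
  set Dinf' : E →L[ℂ] E :=
    ∑ a : Fin r, projE Λ (lam a) * ((hU⁻¹ : (E →L[ℂ] E)ˣ) : E →L[ℂ] E) * projE Λ (lam a)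
    with hDinf'
  have htend := tendsto_conj_exp hΛ hlam hUtop ((hU : (E →L[ℂ] E)ˣ) : E →L[ℂ] E) hvan
  have htend' := tendsto_conj_exp hΛ hlam hUtop ((hU⁻¹ : (E →L[ℂ] E)ˣ) : E →L[ℂ] E) hvan'
  set Du : ℝ → (E →L[ℂ] E)ˣ :=
    fun t => expUnit ((t : ℂ) • Λ) * hU * (expUnit ((t : ℂ) • Λ))⁻¹ with hDu
  have hval : ∀ t : ℝ, ((Du t : (E →L[ℂ] E)ˣ) : E →L[ℂ] E)
      = exp ((t : ℂ) • Λ) * ((hU : (E →L[ℂ] E)ˣ) : E →L[ℂ] E) * exp (-((t : ℂ) • Λ)) :=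
    fun t => rfl
  have hDuinv : ∀ t : ℝ, (Du t)⁻¹
      = expUnit ((t : ℂ) • Λ) * hU⁻¹ * (expUnit ((t : ℂ) • Λ))⁻¹ := by
    intro t
    simp only [hDu]
    group
  have hinvval : ∀ t : ℝ, (((Du t)⁻¹ : (E →L[ℂ] E)ˣ) : E →L[ℂ] E)
      = exp ((t : ℂ) • Λ) * ((hU⁻¹ : (E →L[ℂ] E)ˣ) : E →L[ℂ] E) * exp (-((t : ℂ) • Λ)) := by
    intro t
    rw [hDuinv t]
    rfl
  have htendval : Tendsto (fun t => ((Du t : (E →L[ℂ] E)ˣ) : E →L[ℂ] E)) atTop (𝓝 Dinf) :=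
    Tendsto.congr (fun t => (hval t).symm) htend
  have htendinv : Tendsto (fun t => (((Du t)⁻¹ : (E →L[ℂ] E)ˣ) : E →L[ℂ] E)) atTop
      (𝓝 Dinf') :=
    Tendsto.congr (fun t => (hinvval t).symm) htend'
  have hone : Dinf * Dinf' = 1 := by
    have h1 : Tendsto (fun t => ((Du t : (E →L[ℂ] E)ˣ) : E →L[ℂ] E)
        * (((Du t)⁻¹ : (E →L[ℂ] E)ˣ) : E →L[ℂ] E)) atTop (𝓝 (Dinf * Dinf')) :=
      htendval.mul htendinv
    have h2 : ∀ t : ℝ, ((Du t : (E →L[ℂ] E)ˣ) : E →L[ℂ] E)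
        * (((Du t)⁻¹ : (E →L[ℂ] E)ˣ) : E →L[ℂ] E) = 1 := by
      intro t
      rw [← Units.val_mul]
      simp
    exact tendsto_nhds_unique ((tendsto_congr h2).mp h1) tendsto_const_nhds
  have hone' : Dinf' * Dinf = 1 := by
    have h1 : Tendsto (fun t => (((Du t)⁻¹ : (E →L[ℂ] E)ˣ) : E →L[ℂ] E)
        * ((Du t : (E →L[ℂ] E)ˣ) : E →L[ℂ] E)) atTop (𝓝 (Dinf' * Dinf)) :=
      htendinv.mul htendval
    have h2 : ∀ t : ℝ, (((Du t)⁻¹ : (E →L[ℂ] E)ˣ) : E →L[ℂ] E)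
        * ((Du t : (E →L[ℂ] E)ˣ) : E →L[ℂ] E) = 1 := by
      intro t
      rw [← Units.val_mul]
      simp
    exact tendsto_nhds_unique ((tendsto_congr h2).mp h1) tendsto_const_nhds
  refine ⟨⟨Dinf, Dinf', hone, hone'⟩, ?_, ?_⟩
  · show Dinf * Λ = Λ * Dinf
    rw [hDinf, Finset.sum_mul, Finset.mul_sum]
    refine Finset.sum_congr rfl fun a _ => ?_
    calc projE Λ (lam a) * ((hU : (E →L[ℂ] E)ˣ) : E →L[ℂ] E) * projE Λ (lam a) * Λ
        = projE Λ (lam a) * ((hU : (E →L[ℂ] E)ˣ) : E →L[ℂ] E) * (projE Λ (lam a) * Λ) := by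
          rw [mul_assoc]
      _ = projE Λ (lam a) * ((hU : (E →L[ℂ] E)ˣ) : E →L[ℂ] E)
            * ((lam a : ℂ) • projE Λ (lam a)) := by rw [projE_comp hΛ]
      _ = (lam a : ℂ) • (projE Λ (lam a) * ((hU : (E →L[ℂ] E)ˣ) : E →L[ℂ] E)
            * projE Λ (lam a)) := by rw [mul_smul_comm]
      _ = ((lam a : ℂ) • projE Λ (lam a)) * ((hU : (E →L[ℂ] E)ˣ) : E →L[ℂ] E)
            * projE Λ (lam a) := by rw [smul_mul_assoc, smul_mul_assoc]
      _ = Λ * projE Λ (lam a) * ((hU : (E →L[ℂ] E)ˣ) : E →L[ℂ] E) * projE Λ (lam a) := by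
          rw [comp_projE]
      _ = Λ * (projE Λ (lam a) * ((hU : (E →L[ℂ] E)ˣ) : E →L[ℂ] E) * projE Λ (lam a)) := by
          rw [mul_assoc, mul_assoc, mul_assoc]
  · set h₀ : (E →L[ℂ] E)ˣ := ⟨Dinf, Dinf', hone, hone'⟩ with hh₀
    have hDuTendsto : Tendsto Du atTop (𝓝 h₀) := by
      rw [Units.isInducing_embedProduct.tendsto_nhds_iff]
      have hpair : Tendsto (fun t => (((Du t : (E →L[ℂ] E)ˣ) : E →L[ℂ] E),
          MulOpposite.op (((Du t)⁻¹ : (E →L[ℂ] E)ˣ) : E →L[ℂ] E))) atTop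
          (𝓝 (Dinf, MulOpposite.op Dinf')) :=
        htendval.prodMk_nhds ((MulOpposite.continuous_op.tendsto _).comp htendinv)
      exact hpair
    have hStendsto : Tendsto (fun t => ((R.ρ (Du t) : (V →L[ℂ] V)ˣ) : V →L[ℂ] V)) atTop
        (𝓝 ((R.ρ h₀ : (V →L[ℂ] V)ˣ) : V →L[ℂ] V)) :=
      (R.continuous_ρ.tendsto h₀).comp hDuTendsto
    set w : ℝ → V :=
      fun t => ((R.ρ (expUnit ((t : ℂ) • Λ) * ch.C 0) : (V →L[ℂ] V)ˣ) : V →L[ℂ] V) v with hw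
    set w' : ℝ → V :=
      fun t => ((R.ρ (expUnit ((t : ℂ) • Λ) * ch'.C 0) : (V →L[ℂ] V)ˣ) : V →L[ℂ] V) v with hw'
    have hphi1 : Tendsto (fun t => projL (w t)) atTop (𝓝 (projL vbar)) :=
      (PhiMap_continuous.tendsto (Projectivization.mk ℂ vbar hvbar)).comp hlim
    have hphi2 : Tendsto (fun t => projL (w' t)) atTop (𝓝 (projL vbar')) :=
      (PhiMap_continuous.tendsto (Projectivization.mk ℂ vbar' hvbar')).comp hlim'
    set x : ℝ → V := fun t => projL (w t) vbar with hxdef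
    have hxt : Tendsto x atTop (𝓝 vbar) := by
      have h1 := ((ContinuousLinearMap.apply ℂ V vbar).continuous.tendsto
        (projL vbar)).comp hphi1
      simp only [Function.comp_def, ContinuousLinearMap.apply_apply] at h1
      rw [projL_self hvbar] at h1
      exact h1
    have hxef : ∀ᶠ t in atTop, x t ≠ 0 := hxt.eventually_ne hvbar
    set k : ℝ → ℂ :=
      fun t => ((inner ℂ (w t) (w t) : ℂ))⁻¹ * (inner ℂ (w t) vbar : ℂ) with hk
    have hxk : ∀ t, x t = k t • w t := fun t => projL_apply (w t) vbar
    have hgrp : ∀ t : ℝ, Du t * (expUnit ((t : ℂ) • Λ) * ch.C 0)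
        = expUnit ((t : ℂ) • Λ) * ch'.C 0 := by
      intro t
      simp only [hDu, hUdef]
      group
    have hyx : ∀ t : ℝ, ((R.ρ (Du t) : (V →L[ℂ] V)ˣ) : V →L[ℂ] V) (x t) = k t • w' t := by
      intro t
      rw [hxk t, map_smul]
      congr 1
      calc ((R.ρ (Du t) : (V →L[ℂ] V)ˣ) : V →L[ℂ] V) (w t)
          = ((R.ρ (Du t) * R.ρ (expUnit ((t : ℂ) • Λ) * ch.C 0) :
              (V →L[ℂ] V)ˣ) : V →L[ℂ] V) v := by
            rw [Units.val_mul]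
            rfl
        _ = ((R.ρ (Du t * (expUnit ((t : ℂ) • Λ) * ch.C 0)) :
              (V →L[ℂ] V)ˣ) : V →L[ℂ] V) v := by rw [← map_mul]
        _ = w' t := by rw [hgrp t]
    set z' : V := ((R.ρ h₀ : (V →L[ℂ] V)ˣ) : V →L[ℂ] V) vbar with hz'def
    have hz' : z' ≠ 0 := unit_apply_ne_zero _ hvbar
    have htendy : Tendsto (fun t => ((R.ρ (Du t) : (V →L[ℂ] V)ˣ) : V →L[ℂ] V) (x t)) atTop
        (𝓝 z') := by
      have hp : Tendsto (fun t => (((R.ρ (Du t) : (V →L[ℂ] V)ˣ) : V →L[ℂ] V), x t)) atTop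
          (𝓝 (((R.ρ h₀ : (V →L[ℂ] V)ˣ) : V →L[ℂ] V), vbar)) := hStendsto.prodMk_nhds hxt
      exact ((isBoundedBilinearMap_apply (𝕜 := ℂ)).continuous.tendsto _).comp hp
    have hprojy : Tendsto
        (fun t => projL (((R.ρ (Du t) : (V →L[ℂ] V)ˣ) : V →L[ℂ] V) (x t))) atTop
        (𝓝 (projL z')) :=
      (projL_continuousAt hz').tendsto.comp htendy
    have heqev : ∀ᶠ t in atTop,
        projL (((R.ρ (Du t) : (V →L[ℂ] V)ˣ) : V →L[ℂ] V) (x t)) = projL (w' t) := by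
      filter_upwards [hxef] with t ht0
      have hk0 : k t ≠ 0 := by
        intro h
        apply ht0
        rw [hxk t, h, zero_smul]
      rw [hyx t, projL_smul hk0]
    have hfinal : Tendsto (fun t => projL (w' t)) atTop (𝓝 (projL z')) :=
      hprojy.congr' heqev
    have huniq : projL vbar' = projL z' := tendsto_nhds_unique hphi2 hfinal
    have h5 : vbar' = (((inner ℂ z' z' : ℂ))⁻¹ * (inner ℂ z' vbar' : ℂ)) • z' := by
      have hap := congrArg (fun f : V →L[ℂ] V => f vbar') huniq
      simpa [projL_self hvbar', projL_apply] using hap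
    rw [Projectivization.mk_eq_mk_iff']
    exact ⟨_, h5.symm⟩


end CSW
end
end

section
/- Assume condition (*). Let ρ_k denote the representation of G = GL(E) on Sym^k(E*) induced by the dual of the standard representation, with its induced Hermitian inner product and with the induced self-adjoint operator Λ_k (so that ρ_k(e^{tΛ}) = e^{tΛ_k}), and let d be the associated weight function d(f) = lim_{i→∞} i^{-1} log‖ρ_k(A_i)f‖. Then for any nonzero f_1 ∈ Sym^k(E*) and f_2 ∈ Sym^l(E*), the product in the symmetric algebra satisfies d(f_1 · f_2) = d(f_1) + d(f_2). -/
open Filter Topology NormedSpace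
open scoped LinearAlgebra.Projectivization

set_option linter.unusedSectionVars false

noncomputable section

namespace CSW

variable {E : Type*} [NormedAddCommGroup E] [InnerProductSpace ℂ E] [FiniteDimensional ℂ E]
variable {V : Type*} [NormedAddCommGroup V] [InnerProductSpace ℂ V] [FiniteDimensional ℂ V]

variable {Λ : E →L[ℂ] E}

theorem bil_bounds {P Q R : Type*} [NormedAddCommGroup P] [NormedSpace ℂ P]
    [FiniteDimensional ℂ P] [NormedAddCommGroup Q] [NormedSpace ℂ Q] [FiniteDimensional ℂ Q]
    [NormedAddCommGroup R] [NormedSpace ℂ R] [Nontrivial P] [Nontrivial Q]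
    (B : P →ₗ[ℂ] Q →ₗ[ℂ] R) (hB : ∀ x y, x ≠ 0 → y ≠ 0 → B x y ≠ 0) :
    ∃ m M : ℝ, 0 < m ∧ ∀ x y, x ≠ 0 → y ≠ 0 →
      m * (‖x‖ * ‖y‖) ≤ ‖B x y‖ ∧ ‖B x y‖ ≤ M * (‖x‖ * ‖y‖) := by
  -- build continuous version
  have hcont : Continuous fun p : P × Q => B p.1 p.2 := by
    let L : P →ₗ[ℂ] (Q →L[ℂ] R) :=
      { toFun := fun x => LinearMap.toContinuousLinearMap (B x)
        map_add' := fun a b => by ext y; simp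
        map_smul' := fun c a => by ext y; simp }
    exact (LinearMap.toContinuousLinearMap L).continuous₂
  have hns : Continuous fun p : P × Q => ‖B p.1 p.2‖ := hcont.norm
  set S : Set (P × Q) := Metric.sphere (0 : P) 1 ×ˢ Metric.sphere (0 : Q) 1 with hS
  have hScomp : IsCompact S := (isCompact_sphere 0 1).prod (isCompact_sphere 0 1)
  have hSne : S.Nonempty := by
    refine Set.Nonempty.prod ?_ ?_ <;>
      exact NormedSpace.sphere_nonempty.mpr zero_le_one
  obtain ⟨pmin, hpminS, hmin⟩ := hScomp.exists_isMinOn hSne hns.continuousOn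
  obtain ⟨pmax, hpmaxS, hmax⟩ := hScomp.exists_isMaxOn hSne hns.continuousOn
  refine ⟨‖B pmin.1 pmin.2‖, ‖B pmax.1 pmax.2‖, ?_, ?_⟩
  · have h1 : pmin.1 ≠ 0 := by
      intro h; have := hpminS.1; rw [h] at this; simp at this
    have h2 : pmin.2 ≠ 0 := by
      intro h; have := hpminS.2; rw [h] at this; simp at this
    exact norm_pos_iff.mpr (hB _ _ h1 h2)
  · intro x y hx hy
    have hxn : ‖x‖ ≠ 0 := norm_ne_zero_iff.mpr hx
    have hyn : ‖y‖ ≠ 0 := norm_ne_zero_iff.mpr hy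
    set x' : P := (‖x‖ : ℂ)⁻¹ • x with hx'
    set y' : Q := (‖y‖ : ℂ)⁻¹ • y with hy'
    have hx's : x' ∈ Metric.sphere (0 : P) 1 := by
      simp [hx', norm_smul, norm_inv, inv_mul_cancel₀ hxn]
    have hy's : y' ∈ Metric.sphere (0 : Q) 1 := by
      simp [hy', norm_smul, norm_inv, inv_mul_cancel₀ hyn]
    have key : ‖B x y‖ = ‖x‖ * ‖y‖ * ‖B x' y'‖ := by
      have h : B x' y' = ((‖x‖ : ℂ)⁻¹ * (‖y‖ : ℂ)⁻¹) • B x y := by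
        simp [hx', hy', map_smul, smul_smul, mul_comm]
      rw [h, norm_smul]
      simp only [norm_mul, norm_inv, Complex.norm_real, Real.norm_eq_abs,
        abs_of_nonneg (norm_nonneg x), abs_of_nonneg (norm_nonneg y)]
      field_simp
    have hle := hmin (Set.mk_mem_prod hx's hy's)
    have hge := hmax (Set.mk_mem_prod hx's hy's)
    constructor
    · rw [key, mul_comm]
      exact mul_le_mul_of_nonneg_left hle (by positivity)
    · rw [key, mul_comm (‖B pmax.1 pmax.2‖)]
      exact mul_le_mul_of_nonneg_left hge (by positivity)

/-- Assume condition (*). In the symmetric algebra `Sym(E*)` (with each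
`Sym^k(E*)` carrying the representation of `GL(E)` induced by the dual of the standard
representation and compatible self-adjoint operator `Λ_k`), the weight function
`d(f) = lim_i i⁻¹ log ‖ρ_k(A_i) f‖` is additive on products:
`d(f₁ · f₂) = d(f₁) + d(f₂)` for nonzero `f₁ ∈ Sym^k(E*)`, `f₂ ∈ Sym^l(E*)`. -/
theorem dweight_add_of_mul (Λ : E →L[ℂ] E) (hΛ : IsSelfAdjoint Λ)
    (A : ℕ → (E →L[ℂ] E)ˣ) (hA0 : A 0 = 1) (hstar : CondStar A Λ)
    (S : SymModel Λ) {k l : ℕ} (f₁ : S.P k) (f₂ : S.P l) (h1 : f₁ ≠ 0) (h2 : f₂ ≠ 0)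
    (d₁ d₂ : ℝ)
    (hd₁ : Tendsto (fun i : ℕ => Real.log
        ‖(((S.R k).ρ (A i) : (S.P k →L[ℂ] S.P k)ˣ) : S.P k →L[ℂ] S.P k) f₁‖ / i)
      atTop (𝓝 d₁))
    (hd₂ : Tendsto (fun i : ℕ => Real.log
        ‖(((S.R l).ρ (A i) : (S.P l →L[ℂ] S.P l)ˣ) : S.P l →L[ℂ] S.P l) f₂‖ / i)
      atTop (𝓝 d₂)) :
    Tendsto (fun i : ℕ => Real.log
        ‖(((S.R (k + l)).ρ (A i) : (S.P (k + l) →L[ℂ] S.P (k + l))ˣ) :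
          S.P (k + l) →L[ℂ] S.P (k + l)) (S.mul f₁ f₂)‖ / i)
      atTop (𝓝 (d₁ + d₂)) := by
  haveI : Nontrivial (S.P k) := nontrivial_of_ne f₁ 0 h1
  haveI : Nontrivial (S.P l) := nontrivial_of_ne f₂ 0 h2
  obtain ⟨m, M, hm, hbound⟩ := bil_bounds (S.mul (k := k) (l := l))
    (fun x y hx hy => S.mul_ne_zero hx hy)
  set u : ℕ → S.P k := fun i =>
    (((S.R k).ρ (A i) : (S.P k →L[ℂ] S.P k)ˣ) : S.P k →L[ℂ] S.P k) f₁ with hu_def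
  set v : ℕ → S.P l := fun i =>
    (((S.R l).ρ (A i) : (S.P l →L[ℂ] S.P l)ˣ) : S.P l →L[ℂ] S.P l) f₂ with hv_def
  have hu : ∀ i, u i ≠ 0 := fun i => unit_apply_ne_zero _ h1
  have hv : ∀ i, v i ≠ 0 := fun i => unit_apply_ne_zero _ h2
  have hun : ∀ i, (0:ℝ) < ‖u i‖ := fun i => norm_pos_iff.mpr (hu i)
  have hvn : ∀ i, (0:ℝ) < ‖v i‖ := fun i => norm_pos_iff.mpr (hv i)
  have hw_eq : ∀ i, (((S.R (k + l)).ρ (A i) : (S.P (k + l) →L[ℂ] S.P (k + l))ˣ) :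
      S.P (k + l) →L[ℂ] S.P (k + l)) (S.mul f₁ f₂) = S.mul (u i) (v i) :=
    fun i => S.mul_equivariant (A i) f₁ f₂
  have hM : (0:ℝ) < M := by
    obtain ⟨hlo, hhi⟩ := hbound f₁ f₂ h1 h2
    have hpos : (0:ℝ) < ‖f₁‖ * ‖f₂‖ := mul_pos (norm_pos_iff.mpr h1) (norm_pos_iff.mpr h2)
    nlinarith [hlo.trans hhi]
  set e : ℕ → ℝ := fun i =>
    Real.log ‖S.mul (u i) (v i)‖ - Real.log ‖u i‖ - Real.log ‖v i‖ with he_def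
  have hebound : ∀ i, Real.log m ≤ e i ∧ e i ≤ Real.log M := by
    intro i
    obtain ⟨hlo, hhi⟩ := hbound (u i) (v i) (hu i) (hv i)
    have hpos : (0:ℝ) < ‖u i‖ * ‖v i‖ := mul_pos (hun i) (hvn i)
    have hwpos : (0:ℝ) < ‖S.mul (u i) (v i)‖ :=
      lt_of_lt_of_le (mul_pos hm hpos) hlo
    constructor
    · have := Real.log_le_log (mul_pos hm hpos) hlo
      rw [Real.log_mul hm.ne' hpos.ne', Real.log_mul (hun i).ne' (hvn i).ne'] at this
      simp only [he_def]; linarith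
    · have := Real.log_le_log hwpos hhi
      rw [Real.log_mul hM.ne' hpos.ne', Real.log_mul (hun i).ne' (hvn i).ne'] at this
      simp only [he_def]; linarith
  have he0 : Tendsto (fun i : ℕ => e i / i) atTop (𝓝 0) := by
    refine tendsto_of_tendsto_of_tendsto_of_le_of_le
      (tendsto_const_div_atTop_nhds_zero_nat (Real.log m))
      (tendsto_const_div_atTop_nhds_zero_nat (Real.log M)) (fun i => ?_) (fun i => ?_)
    · exact div_le_div_of_nonneg_right ((hebound i).1) (Nat.cast_nonneg i)
    · exact div_le_div_of_nonneg_right ((hebound i).2) (Nat.cast_nonneg i)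
  have hsum : Tendsto (fun i : ℕ => Real.log ‖u i‖ / i + Real.log ‖v i‖ / i + e i / i)
      atTop (𝓝 (d₁ + d₂ + 0)) := (hd₁.add hd₂).add he0
  rw [add_zero] at hsum
  refine hsum.congr fun i => ?_
  rw [hw_eq i]
  rw [← add_div, ← add_div]
  congr 1
  simp only [he_def]
  ring

end CSW
end
end
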